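/- Any holomorphic function φ on an open connected subset of ℂⁿ \ {0} (n > 1) satisfying z^j ∂φ/∂z^i = 0 for all i ≠ j is constant. -/

import Mathlib

open Complex

/-- Wirtinger derivative `∂f/∂zᵢ` of `f : ℂⁿ → ℂ` at `p`. -/
noncomputable def wdz {n : ℕ} (f : (Fin n → ℂ) → ℂ) (i : Fin n) (p : Fin n → ℂ) : ℂ :=
  (1/2 : ℂ) * (fderiv ℝ f p (Pi.single i 1) - Complex.I * fderiv ℝ f p (Pi.single i Complex.I))

/-- Wirtinger derivative `∂f/∂z̄ᵢ` of `f : ℂⁿ → ℂ` at `p`. -/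
noncomputable def wdzbar {n : ℕ} (f : (Fin n → ℂ) → ℂ) (i : Fin n) (p : Fin n → ℂ) : ℂ :=
  (1/2 : ℂ) * (fderiv ℝ f p (Pi.single i 1) + Complex.I * fderiv ℝ f p (Pi.single i Complex.I))

/-- `f : ℂⁿ → ℂ` is pluriharmonic: all mixed Wirtinger second derivatives vanish. -/
def Pluriharmonic {n : ℕ} (f : (Fin n → ℂ) → ℂ) : Prop :=
  ∀ (i j : Fin n) (p : Fin n → ℂ), wdz (fun q => wdzbar f j q) i p = 0

lemma wdz_eq_fderiv {n : ℕ} {φ : (Fin n → ℂ) → ℂ} {z : Fin n → ℂ}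
    (hd : DifferentiableAt ℂ φ z) (i : Fin n) :
    wdz φ i z = fderiv ℂ φ z (Pi.single i 1) := by
  have hr : fderiv ℝ φ z = (fderiv ℂ φ z).restrictScalars ℝ := hd.fderiv_restrictScalars ℝ
  have hsingle : Pi.single i Complex.I =
      Complex.I • (Pi.single i (1:ℂ) : Fin n → ℂ) := by
    ext k
    by_cases hk : k = i <;> simp [hk, Pi.single_apply]
  rw [wdz, hr, hsingle]
  simp only [ContinuousLinearMap.coe_restrictScalars', map_smul, smul_eq_mul]
  set D := fderiv ℂ φ z (Pi.single i (1:ℂ))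
  linear_combination (-(D/2)) * Complex.I_sq

lemma line_hasDerivAt {n : ℕ} (p f : Fin n → ℂ) (e : Fin n → ℂ) (t s : ℂ) :
    HasDerivAt (fun s : ℂ => p + s • e + t • f) e s := by
  have h1 : HasDerivAt (fun s : ℂ => (p + t • f) + s • e) e s := by
    simpa [one_smul] using ((hasDerivAt_id s).smul_const e).const_add (p + t • f)
  have h2 : (fun s : ℂ => (p + t • f) + s • e) = fun s : ℂ => p + s • e + t • f := by
    funext s; abel
  rwa [h2] at h1

/-- a holomorphic function `φ` on a connected open subset of `ℂⁿ \ {0}`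
(`n > 1`) satisfying `zʲ ∂φ/∂zⁱ = 0` for all `i ≠ j` is constant. -/
theorem holomorphic_oog_constant {n : ℕ} (hn : 1 < n) (Ω : Set (Fin n → ℂ))
    (hΩ : IsOpen Ω) (hconn : IsConnected Ω) (hΩ0 : ∀ z ∈ Ω, z ≠ 0)
    (φ : (Fin n → ℂ) → ℂ) (hφ : DifferentiableOn ℂ φ Ω)
    (h : ∀ z ∈ Ω, ∀ (i j : Fin n), i ≠ j → z j * wdz φ i z = 0) :
    ∃ c : ℂ, ∀ z ∈ Ω, φ z = c := by
  obtain ⟨z₀, hz₀⟩ := hconn.nonempty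
  have hsn : ∀ i : Fin n, ‖(Pi.single i (1:ℂ) : Fin n → ℂ)‖ ≤ 1 := by
    intro i
    refine (pi_norm_le_iff_of_nonneg zero_le_one).2 fun k => ?_
    by_cases hk : k = i <;> simp [hk, Pi.single_apply]
  -- key step : all complex partial derivatives vanish on Ω
  have key : ∀ p ∈ Ω, ∀ i : Fin n, fderiv ℂ φ p (Pi.single i 1) = 0 := by
    intro p hp i
    have hdp : DifferentiableAt ℂ φ p := hφ.differentiableAt (hΩ.mem_nhds hp)
    obtain ⟨j, hij⟩ : ∃ j : Fin n, i ≠ j := by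
      rcases Decidable.eq_or_ne i ⟨0, by omega⟩ with h0 | h0
      · exact ⟨⟨1, hn⟩, by rw [h0]; simp [Fin.ext_iff]⟩
      · exact ⟨⟨0, by omega⟩, h0⟩
    by_cases hpj : p j = 0
    · -- slice argument
      set e : Fin n → ℂ := Pi.single i 1 with he
      set f : Fin n → ℂ := Pi.single j 1 with hf
      obtain ⟨ε, hε, hball⟩ := Metric.isOpen_iff.1 hΩ p hp
      set r : ℝ := ε/2 with hr
      have hr0 : 0 < r := by positivity
      have hmem : ∀ s t : ℂ, ‖s‖ < r → ‖t‖ < r → p + s • e + t • f ∈ Ω := by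
        intro s t hs ht
        apply hball
        rw [Metric.mem_ball, dist_eq_norm]
        have : p + s • e + t • f - p = s • e + t • f := by abel
        rw [this]
        calc ‖s • e + t • f‖ ≤ ‖s • e‖ + ‖t • f‖ := norm_add_le _ _
          _ ≤ ‖s‖ * 1 + ‖t‖ * 1 := by
              gcongr
              · rw [norm_smul]; gcongr; exact hsn i
              · rw [norm_smul]; gcongr; exact hsn j
          _ < r + r := by rw [mul_one, mul_one]; exact add_lt_add hs ht
          _ = ε := by rw [hr]; ring
      have hcoordj : ∀ s t : ℂ, (p + s • e + t • f) j = t := by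
        intro s t
        simp [he, hf, Pi.single_apply, Ne.symm hij, hpj]
      have hderiv : ∀ t s : ℂ, ‖s‖ < r → ‖t‖ < r →
          HasDerivAt (fun s : ℂ => φ (p + s • e + t • f))
            (fderiv ℂ φ (p + s • e + t • f) e) s := by
        intro t s hs ht
        have hq : p + s • e + t • f ∈ Ω := hmem s t hs ht
        have hdq : DifferentiableAt ℂ φ (p + s • e + t • f) :=
          hφ.differentiableAt (hΩ.mem_nhds hq)
        exact hdq.hasFDerivAt.comp_hasDerivAt s (line_hasDerivAt p f e t s)
      have hconst : ∀ t : ℂ, t ≠ 0 → ‖t‖ < r → ∀ s : ℂ, ‖s‖ < r →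
          φ (p + s • e + t • f) = φ (p + t • f) := by
        intro t ht0 ht s hs
        have hsb : s ∈ Metric.ball (0:ℂ) r := by simpa [Metric.mem_ball, dist_eq_norm] using hs
        have h0b : (0:ℂ) ∈ Metric.ball (0:ℂ) r := Metric.mem_ball_self hr0
        have hc := (convex_ball (0:ℂ) r).is_const_of_fderivWithin_eq_zero
          (𝕜 := ℂ) (f := fun s : ℂ => φ (p + s • e + t • f)) ?_ ?_ hsb h0b
        · simpa using hc
        · intro x hx
          have hx' : ‖x‖ < r := by simpa [Metric.mem_ball, dist_eq_norm] using hx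
          exact ((hderiv t x hx' ht).differentiableAt).differentiableWithinAt
        · intro x hx
          have hx' : ‖x‖ < r := by simpa [Metric.mem_ball, dist_eq_norm] using hx
          have hq : p + x • e + t • f ∈ Ω := hmem x t hx' ht
          have hD : fderiv ℂ φ (p + x • e + t • f) e = 0 := by
            have hh := h _ hq i j hij
            rw [wdz_eq_fderiv (hφ.differentiableAt (hΩ.mem_nhds hq))] at hh
            rw [hcoordj x t] at hh
            exact (mul_eq_zero.1 hh).resolve_left ht0
          have hd := hderiv t x hx' ht
          rw [hD] at hd
          have := hd.hasFDerivAt.hasFDerivWithinAt.fderivWithin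
            (Metric.isOpen_ball.uniqueDiffWithinAt hx)
          rw [this]
          ext y
          simp
      -- let t → 0 : φ (p + s • e) = φ p for ‖s‖ < r
      have hsconst : ∀ s : ℂ, ‖s‖ < r → φ (p + s • e) = φ p := by
        intro s hs
        have hps : p + s • e ∈ Ω := by
          have := hmem s 0 hs (by simpa using hr0)
          simpa using this
        have hcont1 : ContinuousAt (fun t : ℂ => φ (p + s • e + t • f)) 0 := by
          have hφc : ContinuousAt φ (p + s • e + (0:ℂ) • f) := by
            have h00 : p + s • e + (0:ℂ) • f = p + s • e := by simp
            rw [h00]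
            exact (hφ.differentiableAt (hΩ.mem_nhds hps)).continuousAt
          have hlin : ContinuousAt (fun t : ℂ => p + s • e + t • f) 0 := by
            fun_prop
          have := hφc.comp (x := (0:ℂ)) (by simpa using hlin)
          simpa [Function.comp_def] using this
        have hcont2 : ContinuousAt (fun t : ℂ => φ (p + t • f)) 0 := by
          have hφc : ContinuousAt φ (p + (0:ℂ) • f) := by
            have h00 : p + (0:ℂ) • f = p := by simp
            rw [h00]
            exact (hφ.differentiableAt (hΩ.mem_nhds hp)).continuousAt
          have hlin : ContinuousAt (fun t : ℂ => p + t • f) 0 := by fun_prop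
          have := hφc.comp (x := (0:ℂ)) (by simpa using hlin)
          simpa [Function.comp_def] using this
        have h1 : Filter.Tendsto (fun t : ℂ => φ (p + s • e + t • f)) (nhdsWithin 0 {0}ᶜ)
            (nhds (φ (p + s • e))) := by
          have := hcont1.tendsto
          simp only [show p + s • e + (0:ℂ) • f = p + s • e by simp] at this
          exact this.mono_left nhdsWithin_le_nhds
        have h2 : Filter.Tendsto (fun t : ℂ => φ (p + t • f)) (nhdsWithin 0 {0}ᶜ)
            (nhds (φ p)) := by
          have := hcont2.tendsto
          simp only [show p + (0:ℂ) • f = p by simp] at this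
          exact this.mono_left nhdsWithin_le_nhds
        have heq : (fun t : ℂ => φ (p + s • e + t • f)) =ᶠ[nhdsWithin 0 {0}ᶜ]
            (fun t : ℂ => φ (p + t • f)) := by
          have hsmall : ∀ᶠ t : ℂ in nhdsWithin 0 {0}ᶜ, ‖t‖ < r := by
            have : ∀ᶠ t : ℂ in nhds 0, ‖t‖ < r := by
              have := Metric.ball_mem_nhds (0:ℂ) hr0
              filter_upwards [this] with t ht
              simpa [Metric.mem_ball, dist_eq_norm] using ht
            exact this.filter_mono nhdsWithin_le_nhds
          filter_upwards [hsmall, self_mem_nhdsWithin] with t ht ht0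
          exact hconst t ht0 ht s hs
        exact tendsto_nhds_unique (h1.congr' heq) h2
      -- conclude derivative at p in direction e is zero
      have hA : HasDerivAt (fun s : ℂ => φ (p + s • e)) (fderiv ℂ φ p e) 0 := by
        have hline : HasDerivAt (fun s : ℂ => p + s • e) e 0 := by
          simpa [one_smul] using ((hasDerivAt_id (0:ℂ)).smul_const e).const_add p
        exact hdp.hasFDerivAt.comp_hasDerivAt_of_eq 0 hline (by simp)
      have hB : HasDerivAt (fun s : ℂ => φ (p + s • e)) 0 0 := by
        have hev : (fun s : ℂ => φ (p + s • e)) =ᶠ[nhds (0:ℂ)] (fun _ => φ p) := by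
          filter_upwards [Metric.ball_mem_nhds (0:ℂ) hr0] with s hs
          exact hsconst s (by simpa [Metric.mem_ball, dist_eq_norm] using hs)
        exact (hasDerivAt_const (0:ℂ) (φ p)).congr_of_eventuallyEq hev
      exact hA.unique hB
    · have hh := h p hp i j hij
      rw [wdz_eq_fderiv hdp] at hh
      exact (mul_eq_zero.1 hh).resolve_left hpj
  -- total derivative vanishes
  have hz : ∀ p ∈ Ω, fderiv ℂ φ p = 0 := by
    intro p hp
    ext v
    have hv : v = ∑ k, v k • (Pi.single k (1:ℂ) : Fin n → ℂ) := by
      funext m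
      simp [Finset.sum_apply, Pi.single_apply]
    rw [ContinuousLinearMap.zero_apply, hv, map_sum]
    simp [key p hp]
  -- local constancy
  have hloc : ∀ p ∈ Ω, ∃ ε > 0, Metric.ball p ε ⊆ Ω ∧ ∀ z ∈ Metric.ball p ε, φ z = φ p := by
    intro p hp
    obtain ⟨ε, hε, hball⟩ := Metric.isOpen_iff.1 hΩ p hp
    refine ⟨ε, hε, hball, fun z hzb => ?_⟩
    exact (convex_ball p ε).is_const_of_fderivWithin_eq_zero (hφ.mono hball)
      (fun x hx => by
        rw [fderivWithin_of_isOpen Metric.isOpen_ball hx]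
        exact hz x (hball hx)) hzb (Metric.mem_ball_self hε)
  -- clopen argument
  refine ⟨φ z₀, ?_⟩
  by_contra hc
  push_neg at hc
  obtain ⟨w, hw, hwne⟩ := hc
  have hu : IsOpen {z | z ∈ Ω ∧ φ z = φ z₀} := by
    rw [Metric.isOpen_iff]
    rintro z ⟨hzΩ, hzc⟩
    obtain ⟨ε, hε, hb, hcst⟩ := hloc z hzΩ
    exact ⟨ε, hε, fun y hy => ⟨hb hy, (hcst y hy).trans hzc⟩⟩
  have hv : IsOpen {z | z ∈ Ω ∧ φ z ≠ φ z₀} := by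
    rw [Metric.isOpen_iff]
    rintro z ⟨hzΩ, hzc⟩
    obtain ⟨ε, hε, hb, hcst⟩ := hloc z hzΩ
    exact ⟨ε, hε, fun y hy => ⟨hb hy, fun hyc => hzc ((hcst y hy).symm.trans hyc)⟩⟩
  have := hconn.isPreconnected _ _ hu hv
    (fun z hz => by by_cases hzc : φ z = φ z₀
                    · exact Or.inl ⟨hz, hzc⟩
                    · exact Or.inr ⟨hz, hzc⟩)
    ⟨z₀, hz₀, hz₀, rfl⟩ ⟨w, hw, hw, hwne⟩
  obtain ⟨x, -, ⟨-, hx1⟩, ⟨-, hx2⟩⟩ := this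
  exact hx2 hx1
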